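/- Fix w_prev ∈ Ω and γ > 0 with λ + γ > 0. Let I = (ξ_1, …, ξ_b) be distributed according to μ^⊗b and let w_I ∈ Ω be the unique minimizer over Ω of w ↦ φ_I(w) + (γ/2)‖w − w_prev‖². Then for every w ∈ Ω, ((λ + γ)/γ)·E_I‖w_I − w‖² ≤ ‖w_prev − w‖² − (2/γ)·E_I[φ(w_I) − φ(w)] + 8L²/(γ(λ + γ)b). -/

import Mathlib

open MeasureTheory Filter Function Set Topology



section Convexity

variable {E : Type*} [NormedAddCommGroup E] [InnerProductSpace ℝ E] {Ω : Set E}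

lemma sc_min {σ : ℝ} {f : E → ℝ} (hf : StrongConvexOn Ω σ f) {x : E} (hx : x ∈ Ω)
    (hmin : IsMinOn f Ω x) {y : E} (hy : y ∈ Ω) :
    f x + σ / 2 * ‖y - x‖ ^ 2 ≤ f y := by
  set c : ℝ := σ / 2 * ‖y - x‖ ^ 2 with hc
  have key : ∀ a ∈ Set.Ioc (0:ℝ) 1, f x + (1 - a) * c ≤ f y := by
    intro a ha
    have ha0 := ha.1
    have h1 : (0:ℝ) ≤ 1 - a := by linarith [ha.2]
    have hmem : a • y + (1 - a) • x ∈ Ω := hf.1 hy hx ha0.le h1 (by ring)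
    have h2 := hf.2 hy hx ha0.le h1 (by ring)
    simp only [smul_eq_mul] at h2
    have h3 : f x ≤ f (a • y + (1 - a) • x) := hmin hmem
    have h7 : f x ≤ a * f y + (1 - a) * f x - a * (1 - a) * c := by
      rw [hc]; exact h3.trans h2
    have h6 : a * (f x + (1 - a) * c) ≤ a * f y := by nlinarith [h7]
    exact le_of_mul_le_mul_left h6 ha0
  have h5 : Tendsto (fun a : ℝ => f x + (1 - a) * c) (nhdsWithin 0 (Set.Ioi 0))
      (nhds (f x + c)) := by
    have hcont : Continuous fun a : ℝ => f x + (1 - a) * c := by continuity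
    have := (hcont.tendsto 0).mono_left (nhdsWithin_le_nhds (s := Set.Ioi (0:ℝ)))
    simpa using this
  refine le_of_tendsto h5 ?_
  filter_upwards [Ioc_mem_nhdsGT_of_mem (Set.mem_Ico.mpr ⟨le_refl _, zero_lt_one⟩)] with a ha
  exact key a ha

lemma sc_quad (hconv : Convex ℝ Ω) (γ : ℝ) (cc : E) :
    StrongConvexOn Ω γ (fun w => γ / 2 * ‖w - cc‖ ^ 2) := by
  refine ⟨hconv, fun x hx y hy a b ha hb hab => ?_⟩
  simp only [smul_eq_mul]
  have hc' : a • cc + b • cc = cc := by rw [← add_smul, hab, one_smul]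
  have hxy : a • x + b • y - cc = a • (x - cc) + b • (y - cc) := by
    have h9 : a • (x - cc) + b • (y - cc) = a • x + b • y - (a • cc + b • cc) := by
      rw [smul_sub, smul_sub]; abel
    rw [hc'] at h9; exact h9.symm
  rw [hxy]
  have e1 : ‖a • (x - cc) + b • (y - cc)‖ ^ 2
      = a^2 * ‖x - cc‖^2 + 2*(a*b)*(inner ℝ (x - cc) (y - cc) : ℝ) + b^2 * ‖y - cc‖^2 := by
    rw [norm_add_sq_real, norm_smul, norm_smul, real_inner_smul_left, real_inner_smul_right,
      Real.norm_eq_abs, Real.norm_eq_abs, abs_of_nonneg ha, abs_of_nonneg hb, mul_pow, mul_pow]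
    ring
  have e2 : ‖x - y‖^2 = ‖x - cc‖^2 - 2*(inner ℝ (x - cc) (y - cc) : ℝ) + ‖y - cc‖^2 := by
    rw [show x - y = (x - cc) - (y - cc) by abel, norm_sub_sq_real]
  rw [e1, e2]
  have hb' : b = 1 - a := by linarith
  subst hb'
  apply le_of_eq
  ring

lemma sc_avg {Ξ : Type*} (hconv : Convex ℝ Ω) (l : Ξ → E → ℝ) {lam : ℝ}
    (hscl : ∀ ξ, StrongConvexOn Ω lam (l ξ)) {b : ℕ} (hb : 0 < b) (I : Fin b → Ξ) :
    StrongConvexOn Ω lam (fun w => (1 / (b : ℝ)) * ∑ j, l (I j) w) := by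
  refine ⟨hconv, fun x hx y hy a c ha hc hac => ?_⟩
  simp only [smul_eq_mul]
  have hb0 : (0:ℝ) < b := by exact_mod_cast hb
  have h1 : ∀ j : Fin b, l (I j) (a • x + c • y)
      ≤ a * l (I j) x + c * l (I j) y - a * c * (lam / 2 * ‖x - y‖ ^ 2) := fun j => by
    simpa [smul_eq_mul] using (hscl (I j)).2 hx hy ha hc hac
  calc (1 / (b:ℝ)) * ∑ j, l (I j) (a • x + c • y)
      ≤ (1 / (b:ℝ)) * ∑ j : Fin b,
          (a * l (I j) x + c * l (I j) y - a * c * (lam / 2 * ‖x - y‖ ^ 2)) :=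
        mul_le_mul_of_nonneg_left (Finset.sum_le_sum fun j _ => h1 j) (by positivity)
    _ = a * ((1/(b:ℝ)) * ∑ j, l (I j) x) + c * ((1/(b:ℝ)) * ∑ j, l (I j) y)
          - a * c * (lam / 2 * ‖x - y‖ ^ 2) := by
        rw [Finset.sum_sub_distrib, Finset.sum_add_distrib, ← Finset.mul_sum, ← Finset.mul_sum,
          Finset.sum_const, Finset.card_univ, Fintype.card_fin, nsmul_eq_mul]
        field_simp

lemma sc_total {Ξ : Type*} (hconv : Convex ℝ Ω) (l : Ξ → E → ℝ) {lam γ : ℝ}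
    (hscl : ∀ ξ, StrongConvexOn Ω lam (l ξ)) {b : ℕ} (hb : 0 < b)
    (wprev : E) (I : Fin b → Ξ) :
    StrongConvexOn Ω (lam + γ)
      (fun w => (1 / (b : ℝ)) * ∑ j, l (I j) w + γ / 2 * ‖w - wprev‖ ^ 2) := by
  have h := (sc_avg hconv l hscl hb I).add (sc_quad hconv γ wprev)
  refine UniformConvexOn.mono (fun r => le_of_eq ?_) h
  simp only [Pi.add_apply]
  ring

lemma stab {Ξ : Type*} (hconv : Convex ℝ Ω) (l : Ξ → E → ℝ) {lam L γ : ℝ}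
    (hscl : ∀ ξ, StrongConvexOn Ω lam (l ξ)) (hL : 0 < L)
    (hlip : ∀ ξ, ∀ w ∈ Ω, ∀ w' ∈ Ω, |l ξ w - l ξ w'| ≤ L * ‖w - w'‖)
    (wprev : E) (hγ : 0 < γ) (hlg : 0 < lam + γ) {b : ℕ} (hb : 0 < b)
    (wI : (Fin b → Ξ) → E) (hmem : ∀ I, wI I ∈ Ω)
    (hmin : ∀ I, IsMinOn
      (fun w => (1 / (b : ℝ)) * ∑ j, l (I j) w + γ / 2 * ‖w - wprev‖ ^ 2) Ω (wI I))
    (I J : Fin b → Ξ) (j : Fin b) (hIJ : ∀ k, k ≠ j → I k = J k) :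
    ‖wI I - wI J‖ ≤ 2 * L / ((lam + γ) * b) := by
  have hb0 : (0:ℝ) < b := by exact_mod_cast hb
  have hFI := sc_min (sc_total hconv l hscl hb wprev I) (hmem I) (hmin I) (hmem J)
  have hFJ := sc_min (sc_total hconv l hscl hb wprev J) (hmem J) (hmin J) (hmem I)
  rw [show ‖wI J - wI I‖ = ‖wI I - wI J‖ from norm_sub_rev _ _] at hFI
  set D := ‖wI I - wI J‖ with hD
  have hDnn : 0 ≤ D := norm_nonneg _
  have hsum_eq : ∀ w, (1/(b:ℝ)) * ∑ k, l (I k) w - (1/(b:ℝ)) * ∑ k, l (J k) w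
      = (1/(b:ℝ)) * (l (I j) w - l (J j) w) := by
    intro w
    rw [← mul_sub, ← Finset.sum_sub_distrib]
    congr 1
    rw [Finset.sum_eq_single j]
    · intro k _ hk
      rw [hIJ k hk, sub_self]
    · intro h; exact absurd (Finset.mem_univ j) h
  have h1 := hsum_eq (wI J)
  have h2 := hsum_eq (wI I)
  have hlip1 : l (I j) (wI J) - l (I j) (wI I) ≤ L * D := by
    rw [hD, show ‖wI I - wI J‖ = ‖wI J - wI I‖ from norm_sub_rev _ _]
    exact (le_abs_self _).trans (hlip _ _ (hmem J) _ (hmem I))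
  have hlip2 : l (J j) (wI I) - l (J j) (wI J) ≤ L * D := by
    exact (le_abs_self _).trans (hlip _ _ (hmem I) _ (hmem J))
  have hkey : (lam + γ) * D^2 ≤ 2 * L / b * D := by
    have hbinv : (0:ℝ) ≤ 1 / (b:ℝ) := by positivity
    have h3 : (lam + γ) * D^2 ≤ (1/(b:ℝ)) * ((l (I j) (wI J) - l (I j) (wI I))
        + (l (J j) (wI I) - l (J j) (wI J))) := by
      have hr : (1/(b:ℝ)) * ((l (I j) (wI J) - l (I j) (wI I))
          + (l (J j) (wI I) - l (J j) (wI J)))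
          = (1/(b:ℝ)) * (l (I j) (wI J) - l (J j) (wI J))
            - (1/(b:ℝ)) * (l (I j) (wI I) - l (J j) (wI I)) := by ring
      rw [hr, ← h1, ← h2]
      nlinarith [hFI, hFJ]
    calc (lam + γ) * D^2 ≤ _ := h3
      _ ≤ (1/(b:ℝ)) * (L * D + L * D) :=
        mul_le_mul_of_nonneg_left (add_le_add hlip1 hlip2) hbinv
      _ = 2 * L / b * D := by ring
  rcases eq_or_lt_of_le hDnn with h0 | hpos
  · rw [← h0]; positivity
  · have hstep : (lam + γ) * D ≤ 2 * L / b := by nlinarith [hkey, hpos]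
    rw [le_div_iff₀ (by positivity : (0:ℝ) < (lam + γ) * b)]
    rw [le_div_iff₀ hb0] at hstep
    calc D * ((lam + γ) * b) = (lam + γ) * D * b := by ring
      _ ≤ 2 * L := hstep

end Convexity


lemma mp_eval {Ξ : Type*} [MeasurableSpace Ξ] (μ : Measure Ξ) [IsProbabilityMeasure μ]
    {b : ℕ} (j : Fin b) :
    MeasurePreserving (fun I : Fin b → Ξ => I j) (Measure.pi fun _ => μ) μ := by
  refine ⟨measurable_pi_apply j, ?_⟩
  refine Measure.ext fun s hs => ?_
  rw [Measure.map_apply (measurable_pi_apply j) hs]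
  have hpre : (fun I : Fin b → Ξ => I j) ⁻¹' s
      = Set.pi Set.univ (Function.update (fun _ => Set.univ) j s) := by
    ext I
    simp only [Set.mem_preimage, Set.mem_pi, Set.mem_univ, forall_true_left,
      Function.update_apply]
    constructor
    · intro h i
      by_cases hij : i = j
      · rw [if_pos hij, hij]; exact h
      · rw [if_neg hij]; trivial
    · intro h
      have := h j
      rwa [if_pos rfl] at this
  rw [hpre, Measure.pi_pi]
  have : ∀ i : Fin b, μ (Function.update (fun _ => Set.univ) j s i)
      = if i = j then μ s else 1 := by
    intro i
    rw [Function.update_apply]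
    split <;> simp [measure_univ]
  rw [Finset.prod_congr rfl fun i _ => this i, Finset.prod_ite_eq']
  simp

lemma exists_T {Ξ : Type*} [MeasurableSpace Ξ] (μ : Measure Ξ) [IsProbabilityMeasure μ]
    {b : ℕ} (j : Fin b) :
    ∃ T : ((Fin b → Ξ) × Ξ) ≃ᵐ ((Fin b → Ξ) × Ξ),
      MeasurePreserving T ((Measure.pi fun _ : Fin b => μ).prod μ)
        ((Measure.pi fun _ : Fin b => μ).prod μ) ∧
      ∀ I ξ, T (I, ξ) = (Function.update I j ξ, I j) := by
  classical
  let e1 : (Fin (b+1) → Ξ) ≃ᵐ Ξ × (Fin b → Ξ) :=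
    MeasurableEquiv.piFinSuccAbove (fun _ => Ξ) (Fin.last b)
  let c : Fin (b+1) ≃ Fin (b+1) := Equiv.swap (Fin.castSucc j) (Fin.last b)
  let e2 : (Fin (b+1) → Ξ) ≃ᵐ (Fin (b+1) → Ξ) :=
    MeasurableEquiv.arrowCongr' c (MeasurableEquiv.refl Ξ)
  let sw : Ξ × (Fin b → Ξ) ≃ᵐ (Fin b → Ξ) × Ξ := (MeasurableEquiv.prodComm : Ξ × (Fin b → Ξ) ≃ᵐ (Fin b → Ξ) × Ξ)
  refine ⟨sw.symm.trans (e1.symm.trans (e2.trans (e1.trans sw))), ?_, ?_⟩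
  · have m1 : MeasurePreserving e1 (Measure.pi fun _ : Fin (b+1) => μ)
        (μ.prod (Measure.pi fun _ : Fin b => μ)) :=
      measurePreserving_piFinSuccAbove (fun _ => μ) (Fin.last b)
    have m2 : MeasurePreserving e2 (Measure.pi fun _ : Fin (b+1) => μ)
        (Measure.pi fun _ : Fin (b+1) => μ) :=
      measurePreserving_arrowCongr' _ _ c (MeasurableEquiv.refl Ξ)
        (fun _ => ⟨measurable_id, Measure.map_id⟩)
    have msw : MeasurePreserving sw (μ.prod (Measure.pi fun _ : Fin b => μ))
        ((Measure.pi fun _ : Fin b => μ).prod μ) :=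
      ⟨sw.measurable, Measure.prod_swap⟩
    have msw' : MeasurePreserving sw.symm ((Measure.pi fun _ : Fin b => μ).prod μ)
        (μ.prod (Measure.pi fun _ : Fin b => μ)) := MeasurePreserving.symm sw msw
    have m1' : MeasurePreserving e1.symm (μ.prod (Measure.pi fun _ : Fin b => μ))
        (Measure.pi fun _ : Fin (b+1) => μ) := MeasurePreserving.symm e1 m1
    have hcoe : ⇑(sw.symm.trans (e1.symm.trans (e2.trans (e1.trans sw))))
        = ⇑sw ∘ ⇑e1 ∘ ⇑e2 ∘ ⇑e1.symm ∘ ⇑sw.symm := rfl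
    rw [hcoe]
    exact msw.comp (m1.comp (m2.comp (m1'.comp msw')))
  · intro I ξ
    have h1 : sw.symm (I, ξ) = (ξ, I) := rfl
    have h2 : e1.symm (ξ, I) = Fin.insertNth (Fin.last b) ξ I := rfl
    set g : Fin (b+1) → Ξ := Fin.insertNth (Fin.last b) ξ I with hg
    have h3 : e2 g = g ∘ c := by
      funext i
      show (MeasurableEquiv.arrowCongr' c (MeasurableEquiv.refl Ξ)) g i = g (c i)
      simp [MeasurableEquiv.arrowCongr', Equiv.arrowCongr', Equiv.arrowCongr,
        Equiv.symm_swap, c]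
    have hglast : g (Fin.last b) = ξ := by rw [hg]; exact Fin.insertNth_apply_same _ _ _
    have hgcast : ∀ k : Fin b, g (Fin.castSucc k) = I k := by
      intro k
      have hsa : (Fin.last b).succAbove k = Fin.castSucc k := by rw [Fin.succAbove_last]
      rw [hg, ← hsa, Fin.insertNth_apply_succAbove]
    have hc1 : ∀ k : Fin b, c (Fin.castSucc k)
        = if k = j then Fin.last b else Fin.castSucc k := by
      intro k
      by_cases hk : k = j
      · subst hk; simp [c, Equiv.swap_apply_left]
      · rw [if_neg hk]
        apply Equiv.swap_apply_of_ne_of_ne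
        · simpa [Fin.castSucc_inj] using hk
        · exact (Fin.castSucc_lt_last k).ne
    have hc2 : c (Fin.last b) = Fin.castSucc j := Equiv.swap_apply_right _ _
    have h4 : e1 (g ∘ c) = (I j, Function.update I j ξ) := by
      have ha : (g ∘ c) (Fin.last b) = I j := by
        simp only [Function.comp_apply, hc2, hgcast j]
      have hb' : (fun k : Fin b => (g ∘ c) ((Fin.last b).succAbove k)) = Function.update I j ξ := by
        funext k
        simp only [Function.comp_apply, Fin.succAbove_last]
        rw [hc1 k]
        by_cases hk : k = j
        · subst hk; rw [if_pos rfl, hglast, Function.update_self]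
        · rw [if_neg hk, hgcast k, Function.update_of_ne hk]
      show ((g ∘ c) (Fin.last b), fun k => (g ∘ c) ((Fin.last b).succAbove k))
          = (I j, Function.update I j ξ)
      rw [ha, hb']
    show sw (e1 (e2 (e1.symm (sw.symm (I, ξ))))) = _
    rw [h1, h2, h3, h4]
    rfl


lemma aesm_comp {α : Type*} [MeasurableSpace α] [Nonempty α] {κ : Measure α}
    {Ξ : Type*} [MeasurableSpace Ξ] {μ : Measure Ξ}
    {E : Type*} [NormedAddCommGroup E] {Ω : Set E} (l : Ξ → E → ℝ) {L : ℝ}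
    (hlip : ∀ ξ, ∀ w ∈ Ω, ∀ w' ∈ Ω, |l ξ w - l ξ w'| ≤ L * ‖w - w'‖)
    (hml : ∀ w ∈ Ω, AEStronglyMeasurable (fun ξ => l ξ w) μ)
    {π : α → Ξ} (hπ : Measurable π) (hπq : Measure.QuasiMeasurePreserving π κ μ)
    {g : α → E} (hg : StronglyMeasurable g) (hgΩ : ∀ x, g x ∈ Ω) :
    AEStronglyMeasurable (fun x => l (π x) (g x)) κ := by
  classical
  borelize E
  haveI : TopologicalSpace.SeparableSpace (Set.range g) :=
    hg.isSeparable_range.separableSpace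
  have h₀ : g (Classical.arbitrary α) ∈ Set.range g := ⟨_, rfl⟩
  set G : ℕ → SimpleFunc α E :=
    fun n => SimpleFunc.approxOn g hg.measurable (Set.range g) _ h₀ n with hGdef
  have hGΩ : ∀ n x, G n x ∈ Ω := by
    intro n x
    obtain ⟨y, hy⟩ := SimpleFunc.approxOn_mem hg.measurable h₀ n x
    rw [hGdef]; dsimp only; rw [← hy]; exact hgΩ y
  have hGmeas : ∀ n, AEStronglyMeasurable (fun x => l (π x) (G n x)) κ := by
    intro n
    have hrepr : (fun x => l (π x) (G n x))
        = fun x => ∑ cc ∈ (G n).range, if G n x = cc then l (π x) cc else 0 := by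
      funext x
      rw [Finset.sum_ite_eq (G n).range (G n x) (fun cc => l (π x) cc)]
      simp [SimpleFunc.mem_range_self]
    rw [hrepr]
    refine Finset.aestronglyMeasurable_fun_sum _ fun cc hc => ?_
    have hcΩ : cc ∈ Ω := by
      obtain ⟨x, hx⟩ := SimpleFunc.mem_range.1 hc
      rw [← hx]; exact hGΩ n x
    have hmk := hml cc hcΩ
    refine AEStronglyMeasurable.congr
      (f := fun x => if G n x = cc then hmk.mk _ (π x) else 0) ?_ ?_
    · apply StronglyMeasurable.aestronglyMeasurable
      have hpw : (fun x => if G n x = cc then hmk.mk _ (π x) else 0)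
          = Set.piecewise ((G n) ⁻¹' {cc}) (fun x => hmk.mk _ (π x)) (fun _ => 0) := by
        funext x
        by_cases h : G n x = cc <;> simp [Set.piecewise, h]
      rw [hpw]
      exact StronglyMeasurable.piecewise ((G n).measurableSet_fiber cc)
        (hmk.stronglyMeasurable_mk.comp_measurable hπ) stronglyMeasurable_const
    · have haeq := hπq.ae_eq hmk.ae_eq_mk
      filter_upwards [haeq] with x hx
      simp only [Function.comp_apply] at hx
      by_cases h : G n x = cc
      · simp only [h, if_true]
        exact hx.symm
      · simp only [h, if_false]
  have htend : ∀ x, Tendsto (fun n => l (π x) (G n x)) atTop (𝓝 (l (π x) (g x))) := by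
    intro x
    have hGt : Tendsto (fun n => G n x) atTop (𝓝 (g x)) :=
      SimpleFunc.tendsto_approxOn hg.measurable h₀ (subset_closure (Set.mem_range_self x))
    rw [tendsto_iff_dist_tendsto_zero]
    have hb : Tendsto (fun n => L * ‖G n x - g x‖) atTop (𝓝 0) := by
      have h1 : Tendsto (fun n => G n x - g x) atTop (𝓝 (g x - g x)) :=
        hGt.sub tendsto_const_nhds
      rw [sub_self] at h1
      have h2 := h1.norm
      rw [norm_zero] at h2
      simpa using h2.const_mul L
    refine squeeze_zero (fun n => dist_nonneg) (fun n => ?_) hb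
    rw [Real.dist_eq]
    exact hlip (π x) _ (hGΩ n x) _ (hgΩ x)
  exact aestronglyMeasurable_of_tendsto_ae atTop hGmeas (Eventually.of_forall htend)

/-- One step of exact minibatch-prox: with `w_I` the minimizer over `Ω` of
`w ↦ φ_I(w) + (γ/2)‖w - w_prev‖²` for a minibatch `I ∼ μ^⊗b`, for every `w ∈ Ω`,
`((λ+γ)/γ)·E_I‖w_I - w‖² ≤ ‖w_prev - w‖² - (2/γ)·E_I[φ(w_I) - φ(w)] + 8L²/(γ(λ+γ)b)`. -/
theorem stmt_5 {E : Type*} [NormedAddCommGroup E] [InnerProductSpace ℝ E]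
    {Ω : Set E} (hne : Ω.Nonempty) (hcl : IsClosed Ω) (hconv : Convex ℝ Ω)
    {Ξ : Type*} [MeasurableSpace Ξ] (μ : Measure Ξ) [IsProbabilityMeasure μ]
    (l : Ξ → E → ℝ) {lam L : ℝ} (hlam : 0 ≤ lam) (hL : 0 < L)
    (hconvl : ∀ ξ, ConvexOn ℝ Ω (l ξ))
    (hscl : ∀ ξ, StrongConvexOn Ω lam (l ξ))
    (hlip : ∀ ξ, ∀ w ∈ Ω, ∀ w' ∈ Ω, |l ξ w - l ξ w'| ≤ L * ‖w - w'‖)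
    (φ : E → ℝ) (hφ : ∀ w, φ w = ∫ ξ, l ξ w ∂μ)
    (hφint : ∀ w ∈ Ω, Integrable (fun ξ => l ξ w) μ)
    (wprev : E) (hwprev : wprev ∈ Ω) {γ : ℝ} (hγ : 0 < γ) (hlg : 0 < lam + γ)
    {b : ℕ} (hb : 1 ≤ b)
    (P : Measure (Fin b → Ξ)) (hP : P = Measure.pi fun _ : Fin b => μ)
    (wI : (Fin b → Ξ) → E) (hmem : ∀ I, wI I ∈ Ω)
    (hmin : ∀ I, IsMinOn
      (fun w => (1 / (b : ℝ)) * ∑ j, l (I j) w + γ / 2 * ‖w - wprev‖ ^ 2) Ω (wI I))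
    (hmeas : AEStronglyMeasurable wI P)
    (hint1 : ∀ w : E, Integrable (fun I => ‖wI I - w‖ ^ 2) P)
    (hint2 : Integrable (fun I => φ (wI I)) P) :
    ∀ w ∈ Ω,
      (lam + γ) / γ * ∫ I, ‖wI I - w‖ ^ 2 ∂P ≤
        ‖wprev - w‖ ^ 2 - 2 / γ * ∫ I, (φ (wI I) - φ w) ∂P +
          8 * L ^ 2 / (γ * (lam + γ) * b) := by
  intro w hw
  classical
  -- basic facts
  have hbpos : 0 < b := hb
  have hb0 : (0:ℝ) < b := by exact_mod_cast hbpos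
  have hΞ : Nonempty Ξ := by
    by_contra h
    haveI := not_nonempty_iff.1 h
    exact (IsProbabilityMeasure.ne_zero μ) (Measure.eq_zero_of_isEmpty μ)
  haveI : Nonempty (Fin b → Ξ) := ⟨fun _ => Classical.arbitrary Ξ⟩
  haveI : Nonempty ((Fin b → Ξ) × Ξ) := instNonemptyProd
  subst hP
  set P : Measure (Fin b → Ξ) := Measure.pi fun _ : Fin b => μ with hPdef
  haveI hPP : IsProbabilityMeasure P := by rw [hPdef]; infer_instance
  set ν : Measure ((Fin b → Ξ) × Ξ) := P.prod μ with hνdef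
  haveI hPν : IsProbabilityMeasure ν := by rw [hνdef]; infer_instance
  borelize E
  -- a nice strongly measurable version of wI with values in Ω
  set g0 : (Fin b → Ξ) → E := hmeas.mk wI with hg0def
  have hg0 : StronglyMeasurable g0 := hmeas.stronglyMeasurable_mk
  have heq0 : wI =ᵐ[P] g0 := hmeas.ae_eq_mk
  have hΩm : MeasurableSet Ω := hcl.measurableSet
  set g : (Fin b → Ξ) → E := (g0 ⁻¹' Ω).piecewise g0 (fun _ => wprev) with hgdef
  have hgsm : StronglyMeasurable g :=
    StronglyMeasurable.piecewise (hg0.measurable hΩm) hg0 stronglyMeasurable_const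
  have hgΩ : ∀ I, g I ∈ Ω := by
    intro I
    rw [hgdef]
    by_cases h : I ∈ g0 ⁻¹' Ω
    · rw [Set.piecewise_eq_of_mem _ _ _ h]; exact h
    · rw [Set.piecewise_eq_of_notMem _ _ _ h]; exact hwprev
  have hgeq : g =ᵐ[P] wI := by
    filter_upwards [heq0] with I hI
    have hmemI : I ∈ g0 ⁻¹' Ω := by
      show g0 I ∈ Ω
      rw [← hI]; exact hmem I
    rw [hgdef, Set.piecewise_eq_of_mem _ _ _ hmemI, ← hI]
  have hml : ∀ v ∈ Ω, AEStronglyMeasurable (fun ξ => l ξ v) μ :=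
    fun v hv => (hφint v hv).aestronglyMeasurable
  -- measure preserving projections
  have mpe : ∀ j : Fin b, MeasurePreserving (fun I : Fin b → Ξ => I j) P μ := by
    intro j; rw [hPdef]; exact mp_eval μ j
  have mp_fst : MeasurePreserving (Prod.fst : (Fin b → Ξ) × Ξ → (Fin b → Ξ)) ν P :=
    ⟨measurable_fst, by rw [hνdef, Measure.map_fst_prod]; simp [measure_univ]⟩
  have mp_snd : MeasurePreserving (Prod.snd : (Fin b → Ξ) × Ξ → Ξ) ν μ :=
    ⟨measurable_snd, by rw [hνdef, Measure.map_snd_prod]; simp [measure_univ]⟩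
  -- almost everywhere strong measurability
  have hasm_h : ∀ j : Fin b, AEStronglyMeasurable (fun I => l (I j) (wI I)) P := by
    intro j
    have h1 := aesm_comp l hlip hml (measurable_pi_apply j)
      (mpe j).quasiMeasurePreserving hgsm hgΩ
    exact h1.congr (by filter_upwards [hgeq] with I hI; rw [hI])
  have hasm_u : AEStronglyMeasurable (fun p : (Fin b → Ξ) × Ξ => l p.2 (wI p.1)) ν := by
    have h1 := aesm_comp l hlip hml measurable_snd mp_snd.quasiMeasurePreserving
      (hgsm.comp_measurable measurable_fst) (fun p => hgΩ p.1)
    have h2 : (fun p : (Fin b → Ξ) × Ξ => g p.1) =ᵐ[ν] (fun p => wI p.1) :=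
      mp_fst.quasiMeasurePreserving.ae_eq hgeq
    exact h1.congr (by filter_upwards [h2] with p hp; exact congrArg (fun z => l p.2 z) hp)
  -- integrability
  have hn1 : Integrable (fun I => ‖wI I - wprev‖) P := by
    refine Integrable.mono' ((hint1 wprev).add (integrable_const 1))
      ((hmeas.sub aestronglyMeasurable_const).norm) (Eventually.of_forall fun I => ?_)
    have h1 : (0:ℝ) ≤ ‖wI I - wprev‖ := norm_nonneg _
    rw [norm_norm]
    simp only [Pi.add_apply]
    nlinarith [sq_nonneg (‖wI I - wprev‖ - 1)]
  have hint_w : ∀ j : Fin b, Integrable (fun I => l (I j) w) P := fun j =>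
    ((mpe j).integrable_comp (hml w hw)).2 (hφint w hw)
  have hint_wprev : ∀ j : Fin b, Integrable (fun I => l (I j) wprev) P := fun j =>
    ((mpe j).integrable_comp (hml wprev hwprev)).2 (hφint wprev hwprev)
  have habs_bound : ∀ (ξ : Ξ) (v : E), v ∈ Ω → |l ξ v| ≤ |l ξ wprev| + L * ‖v - wprev‖ := by
    intro ξ v hv
    have h1 : |l ξ v| - |l ξ wprev| ≤ |l ξ v - l ξ wprev| := abs_sub_abs_le_abs_sub _ _
    have h2 := hlip ξ v hv wprev hwprev
    linarith
  have hint_h : ∀ j : Fin b, Integrable (fun I => l (I j) (wI I)) P := by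
    intro j
    refine Integrable.mono' ((hint_wprev j).abs.add (hn1.const_mul L)) (hasm_h j)
      (Eventually.of_forall fun I => ?_)
    rw [Real.norm_eq_abs]
    exact habs_bound (I j) (wI I) (hmem I)
  have hint_u : Integrable (fun p : (Fin b → Ξ) × Ξ => l p.2 (wI p.1)) ν := by
    have b1 : Integrable (fun p : (Fin b → Ξ) × Ξ => l p.2 wprev) ν :=
      (mp_snd.integrable_comp (hml wprev hwprev)).2 (hφint wprev hwprev)
    have b2 : Integrable (fun p : (Fin b → Ξ) × Ξ => ‖wI p.1 - wprev‖) ν :=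
      (mp_fst.integrable_comp hn1.aestronglyMeasurable).2 hn1
    refine Integrable.mono' (b1.abs.add (b2.const_mul L)) hasm_u
      (Eventually.of_forall fun p => ?_)
    rw [Real.norm_eq_abs]
    exact habs_bound p.2 (wI p.1) (hmem p.1)
  -- integral identities
  have hev : ∀ (j : Fin b) (v : E), v ∈ Ω → ∫ I, l (I j) v ∂P = ∫ ξ, l ξ v ∂μ := by
    intro j v hv
    conv_rhs => rw [← (mpe j).map_eq]
    rw [integral_map (measurable_pi_apply j).aemeasurable
      (by rw [(mpe j).map_eq]; exact hml v hv)]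
  have ifst : ∀ j : Fin b, ∫ I, l (I j) (wI I) ∂P = ∫ p, l (p.1 j) (wI p.1) ∂ν := by
    intro j
    conv_lhs => rw [← mp_fst.map_eq]
    rw [integral_map measurable_fst.aemeasurable
      (by rw [mp_fst.map_eq]; exact hasm_h j)]
  have iphi : ∫ I, φ (wI I) ∂P = ∫ p, l p.2 (wI p.1) ∂ν := by
    have h1 : ∫ I, φ (wI I) ∂P = ∫ I, ∫ ξ, l ξ (wI I) ∂μ ∂P := by
      simp only [hφ]
    rw [h1, hνdef]
    exact (integral_prod _ (by rw [← hνdef]; exact hint_u)).symm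
  -- the replacement/stability bound
  have hstab : ∀ (I : Fin b → Ξ) (j : Fin b) (ξ : Ξ),
      ‖wI (Function.update I j ξ) - wI I‖ ≤ 2 * L / ((lam + γ) * b) := by
    intro I j ξ
    exact stab hconv l hscl hL hlip wprev hγ hlg hbpos wI hmem hmin
      (Function.update I j ξ) I j (fun k hk => Function.update_of_ne hk _ _)
  have keyBj : ∀ j : Fin b,
      ∫ I, φ (wI I) ∂P - ∫ I, l (I j) (wI I) ∂P ≤ 2 * L ^ 2 / ((lam + γ) * b) := by
    intro j
    obtain ⟨T, mpT, hT⟩ := exists_T μ j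
    rw [← hPdef] at mpT
    rw [← hνdef] at mpT
    have key3 : Integrable
        (fun x : (Fin b → Ξ) × Ξ => l (x.1 j) (wI (Function.update x.1 j x.2))) ν := by
      have h1 := (mpT.integrable_comp_emb T.measurableEmbedding
        (g := fun p : (Fin b → Ξ) × Ξ => l p.2 (wI p.1))).2 hint_u
      refine h1.congr (Eventually.of_forall fun x => ?_)
      rcases x with ⟨I, ξ⟩
      simp only [Function.comp_apply]
      rw [hT I ξ]
    have key4 : Integrable (fun p : (Fin b → Ξ) × Ξ => l (p.1 j) (wI p.1)) ν :=
      (mp_fst.integrable_comp (hasm_h j)).2 (hint_h j)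
    have key2 : ∫ p, l p.2 (wI p.1) ∂ν
        = ∫ p, l (p.1 j) (wI (Function.update p.1 j p.2)) ∂ν := by
      have h21 := mpT.integral_comp T.measurableEmbedding
        (fun p : (Fin b → Ξ) × Ξ => l p.2 (wI p.1))
      have h22 : ∫ x, l ((T x).2) (wI ((T x).1)) ∂ν
          = ∫ x, l (x.1 j) (wI (Function.update x.1 j x.2)) ∂ν := by
        refine integral_congr_ae (Eventually.of_forall fun x => ?_)
        rcases x with ⟨I, ξ⟩
        show l ((T (I, ξ)).2) (wI ((T (I, ξ)).1)) = l (I j) (wI (Function.update I j ξ))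
        rw [hT I ξ]
      exact h21.symm.trans h22
    have key5 : ∫ p, (l (p.1 j) (wI (Function.update p.1 j p.2)) - l (p.1 j) (wI p.1)) ∂ν
        ≤ 2 * L ^ 2 / ((lam + γ) * b) := by
      have hptb : ∀ p : (Fin b → Ξ) × Ξ,
          l (p.1 j) (wI (Function.update p.1 j p.2)) - l (p.1 j) (wI p.1)
            ≤ 2 * L ^ 2 / ((lam + γ) * b) := by
        intro p
        have h1 := (le_abs_self _).trans
          (hlip (p.1 j) _ (hmem (Function.update p.1 j p.2)) _ (hmem p.1))
        have h2 := hstab p.1 j p.2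
        have h3 : L * ‖wI (Function.update p.1 j p.2) - wI p.1‖
            ≤ L * (2 * L / ((lam + γ) * b)) := mul_le_mul_of_nonneg_left h2 hL.le
        have h4 : L * (2 * L / ((lam + γ) * b)) = 2 * L ^ 2 / ((lam + γ) * b) := by ring
        linarith
      calc ∫ p, (l (p.1 j) (wI (Function.update p.1 j p.2)) - l (p.1 j) (wI p.1)) ∂ν
          ≤ ∫ _p, (2 * L ^ 2 / ((lam + γ) * (b:ℝ))) ∂ν :=
            integral_mono (key3.sub key4) (integrable_const _) hptb
        _ = 2 * L ^ 2 / ((lam + γ) * b) := by simp [measure_univ]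
    rw [iphi, key2, ifst j, ← integral_sub key3 key4]
    exact key5
  -- averaged bound
  have keyB : ∫ I, φ (wI I) ∂P - ∫ I, (1 / (b:ℝ)) * ∑ j, l (I j) (wI I) ∂P
      ≤ 2 * L ^ 2 / ((lam + γ) * b) := by
    have hsplit : ∫ I, (1 / (b:ℝ)) * ∑ j, l (I j) (wI I) ∂P
        = (1 / (b:ℝ)) * ∑ j : Fin b, ∫ I, l (I j) (wI I) ∂P := by
      rw [integral_const_mul, integral_finset_sum _ (fun j _ => hint_h j)]
    set A := ∫ I, φ (wI I) ∂P with hAdef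
    set Sb := ∑ j : Fin b, ∫ I, l (I j) (wI I) ∂P with hSbdef
    have hsum2 : ∑ _j : Fin b, (2 * L ^ 2 / ((lam + γ) * (b:ℝ)))
        = (b:ℝ) * (2 * L ^ 2 / ((lam + γ) * b)) := by
      rw [Finset.sum_const, Finset.card_univ, Fintype.card_fin, nsmul_eq_mul]
    have hexp : ∑ j : Fin b, (A - ∫ I, l (I j) (wI I) ∂P) = (b:ℝ) * A - Sb := by
      rw [Finset.sum_sub_distrib, Finset.sum_const, Finset.card_univ, Fintype.card_fin,
        nsmul_eq_mul, hSbdef]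
    have h1 : (b:ℝ) * A - Sb ≤ (b:ℝ) * (2 * L ^ 2 / ((lam + γ) * b)) := by
      rw [← hexp, ← hsum2]
      exact Finset.sum_le_sum fun j _ => keyBj j
    rw [hsplit]
    have h6 := mul_le_mul_of_nonneg_left h1 (by positivity : (0:ℝ) ≤ 1 / (b:ℝ))
    have h7 : (1 / (b:ℝ)) * ((b:ℝ) * A - Sb) = A - (1 / (b:ℝ)) * Sb := by
      field_simp
    have h8 : (1 / (b:ℝ)) * ((b:ℝ) * (2 * L ^ 2 / ((lam + γ) * b)))
        = 2 * L ^ 2 / ((lam + γ) * b) := by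
      field_simp
    rw [h7, h8] at h6
    exact h6
  -- pointwise inequality from strong convexity of the prox objective
  have hptw : ∀ I : Fin b → Ξ,
      (lam + γ) / 2 * ‖wI I - w‖ ^ 2 + (1 / (b:ℝ)) * ∑ j, l (I j) (wI I)
        ≤ γ / 2 * ‖w - wprev‖ ^ 2 + (1 / (b:ℝ)) * ∑ j, l (I j) w := by
    intro I
    have h := sc_min (sc_total hconv l hscl hbpos wprev I) (hmem I) (hmin I) hw
    have hq : (0:ℝ) ≤ γ / 2 * ‖wI I - wprev‖ ^ 2 := by positivity
    rw [show ‖w - wI I‖ = ‖wI I - w‖ from norm_sub_rev _ _] at h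
    linarith
  -- integrate the pointwise inequality
  have intB : Integrable (fun I => (1 / (b:ℝ)) * ∑ j, l (I j) (wI I)) P :=
    (integrable_finset_sum _ (fun j _ => hint_h j)).const_mul _
  have intL : Integrable (fun I => (lam + γ) / 2 * ‖wI I - w‖ ^ 2
      + (1 / (b:ℝ)) * ∑ j, l (I j) (wI I)) P := ((hint1 w).const_mul _).add intB
  have intR : Integrable (fun I => γ / 2 * ‖w - wprev‖ ^ 2
      + (1 / (b:ℝ)) * ∑ j, l (I j) w) P :=
    (integrable_const _).add ((integrable_finset_sum _ (fun j _ => hint_w j)).const_mul _)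
  have hInt := integral_mono intL intR hptw
  have hIL : ∫ I, ((lam + γ) / 2 * ‖wI I - w‖ ^ 2
      + (1 / (b:ℝ)) * ∑ j, l (I j) (wI I)) ∂P
      = (lam + γ) / 2 * (∫ I, ‖wI I - w‖ ^ 2 ∂P)
        + ∫ I, (1 / (b:ℝ)) * ∑ j, l (I j) (wI I) ∂P := by
    rw [integral_add ((hint1 w).const_mul _) intB, integral_const_mul]
  have hIR : ∫ I, (γ / 2 * ‖w - wprev‖ ^ 2 + (1 / (b:ℝ)) * ∑ j, l (I j) w) ∂P
      = γ / 2 * ‖w - wprev‖ ^ 2 + φ w := by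
    rw [integral_add (integrable_const _)
      ((integrable_finset_sum _ (fun j _ => hint_w j)).const_mul _),
      integral_const, integral_const_mul, integral_finset_sum _ (fun j _ => hint_w j)]
    have hsum : ∑ j : Fin b, ∫ I, l (I j) w ∂P = (b:ℝ) * φ w := by
      have : ∀ j : Fin b, j ∈ Finset.univ → ∫ I, l (I j) w ∂P = φ w := fun j _ => by
        rw [hev j w hw, ← hφ]
      rw [Finset.sum_congr rfl this, Finset.sum_const, Finset.card_univ, Fintype.card_fin,
        nsmul_eq_mul]
    rw [hsum]
    have : (1 / (b:ℝ)) * ((b:ℝ) * φ w) = φ w := by field_simp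
    rw [this]
    simp [measure_univ]
  rw [hIL, hIR] at hInt
  -- final arithmetic
  set S := ∫ I, ‖wI I - w‖ ^ 2 ∂P with hSdef
  set A := ∫ I, φ (wI I) ∂P with hAdef
  have hD : ∫ I, (φ (wI I) - φ w) ∂P = A - φ w := by
    rw [integral_sub hint2 (integrable_const _)]
    simp [measure_univ, hAdef]
  have hN : ‖wprev - w‖ = ‖w - wprev‖ := norm_sub_rev _ _
  have hfin : (lam + γ) * S ≤ γ * ‖w - wprev‖ ^ 2 - 2 * (A - φ w)
      + 8 * L ^ 2 / ((lam + γ) * b) := by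
    have hx : (0:ℝ) ≤ L ^ 2 / ((lam + γ) * (b:ℝ)) := by positivity
    have hC2 : 2 * L ^ 2 / ((lam + γ) * (b:ℝ)) = 2 * (L ^ 2 / ((lam + γ) * b)) := by ring
    have h8 : 8 * L ^ 2 / ((lam + γ) * (b:ℝ)) = 8 * (L ^ 2 / ((lam + γ) * b)) := by ring
    have hkB := keyB
    rw [hC2] at hkB
    rw [h8]
    linarith [hInt, hkB]
  rw [hD, hN]
  have hrw : (lam + γ) / γ * S = (1 / γ) * ((lam + γ) * S) := by ring
  have hrw2 : ‖w - wprev‖ ^ 2 - 2 / γ * (A - φ w) + 8 * L ^ 2 / (γ * (lam + γ) * b)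
      = (1 / γ) * (γ * ‖w - wprev‖ ^ 2 - 2 * (A - φ w) + 8 * L ^ 2 / ((lam + γ) * b)) := by
    field_simp
  rw [hrw, hrw2]
  exact mul_le_mul_of_nonneg_left hfin (by positivity)
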